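/- Let F : ℝ_μ → ℝ_μ be defined by F^i(x) = ργ(x^{i−1} − x^i)s(x) for i ≥ 1 and F^0(x) = −ργ x^0 s(x) + κ, where s(x) = ∑_{j≥1} j x^j and μ(j) = j+1. Then F is locally Lipschitz in the μ-norm: for ‖x‖_μ, ‖y‖_μ ≤ z, ‖F(x) − F(y)‖_μ ≤ 4ργz ‖x − y‖_μ. -/

import Mathlib

/-- `s(x) = ∑_{j≥1} j x^j`. -/
noncomputable def sFun (x : ℕ → ℝ) : ℝ := ∑' j : ℕ, (j : ℝ) * x j

/-- The nonlinear part `F` of the drift in Arrigoni's model: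
`F^0(x) = -ργ x^0 s(x) + κ` and `F^i(x) = ργ (x^{i-1} - x^i) s(x)` for `i ≥ 1`. -/
noncomputable def arrigoniF (ρ γ κ : ℝ) (x : ℕ → ℝ) : ℕ → ℝ := fun i =>
  match i with
  | 0 => -(ρ * γ) * x 0 * sFun x + κ
  | Nat.succ n => ρ * γ * (x n - x (n + 1)) * sFun x

/-- The "discrete difference" operator appearing in `F`. -/
noncomputable def Lmap (w : ℕ → ℝ) : ℕ → ℝ := fun i =>
  match i with
  | 0 => w 0
  | Nat.succ n => w n - w (n + 1)

lemma abs_summable_of_mu {w : ℕ → ℝ}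
    (hw : Summable fun j : ℕ => ((j : ℝ) + 1) * |w j|) :
    Summable fun j : ℕ => |w j| := by
  refine Summable.of_nonneg_of_le (fun j => abs_nonneg _) (fun j => ?_) hw
  nlinarith [abs_nonneg (w j), Nat.cast_nonneg (α := ℝ) j]

lemma coe_mul_abs_summable_of_mu {w : ℕ → ℝ}
    (hw : Summable fun j : ℕ => ((j : ℝ) + 1) * |w j|) :
    Summable fun j : ℕ => (j : ℝ) * |w j| := by
  refine Summable.of_nonneg_of_le (fun j => by positivity) (fun j => ?_) hw
  nlinarith [abs_nonneg (w j), Nat.cast_nonneg (α := ℝ) j]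

lemma coe_mul_summable_of_mu {w : ℕ → ℝ}
    (hw : Summable fun j : ℕ => ((j : ℝ) + 1) * |w j|) :
    Summable fun j : ℕ => (j : ℝ) * w j := by
  refine Summable.of_abs ?_
  refine (coe_mul_abs_summable_of_mu hw).congr fun j => ?_
  rw [abs_mul, Nat.abs_cast]

lemma mu_split {w : ℕ → ℝ}
    (hw : Summable fun j : ℕ => ((j : ℝ) + 1) * |w j|) :
    ∑' j : ℕ, ((j : ℝ) + 1) * |w j|
      = (∑' j : ℕ, (j : ℝ) * |w j|) + ∑' j : ℕ, |w j| := by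
  rw [← Summable.tsum_add (coe_mul_abs_summable_of_mu hw) (abs_summable_of_mu hw)]
  exact tsum_congr fun j => by ring

lemma sFun_abs_le {w : ℕ → ℝ}
    (hw : Summable fun j : ℕ => ((j : ℝ) + 1) * |w j|) :
    |sFun w| ≤ (∑' j : ℕ, ((j : ℝ) + 1) * |w j|) - ∑' j : ℕ, |w j| := by
  have h1 : Summable fun j : ℕ => |(j : ℝ) * w j| :=
    (coe_mul_abs_summable_of_mu hw).congr fun j => by rw [abs_mul, Nat.abs_cast]
  have h2 : |sFun w| ≤ ∑' j : ℕ, (j : ℝ) * |w j| := by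
    have h' : Summable fun j : ℕ => ‖(j : ℝ) * w j‖ := by
      refine (coe_mul_abs_summable_of_mu hw).congr fun j => ?_
      rw [Real.norm_eq_abs, abs_mul, Nat.abs_cast]
    have h := norm_tsum_le_tsum_norm h'
    rw [Real.norm_eq_abs] at h
    refine h.trans (le_of_eq (tsum_congr fun j => ?_))
    rw [Real.norm_eq_abs, abs_mul, Nat.abs_cast]
  have h4 := mu_split hw
  linarith [h2]

/-- Summability and bound for the weighted sum of `Lmap w`. -/
lemma Lmap_bound {w : ℕ → ℝ}
    (hw : Summable fun j : ℕ => ((j : ℝ) + 1) * |w j|) :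
    Summable (fun i : ℕ => ((i : ℝ) + 1) * |Lmap w i|) ∧
    ∑' i : ℕ, ((i : ℝ) + 1) * |Lmap w i|
      ≤ 2 * (∑' j : ℕ, ((j : ℝ) + 1) * |w j|) + ∑' j : ℕ, |w j| := by
  have hw1 : Summable fun j : ℕ => |w j| := abs_summable_of_mu hw
  set prev : ℕ → ℝ := fun i => match i with | 0 => 0 | Nat.succ n => |w n| with hprevdef
  have hprev : Summable fun i : ℕ => ((i : ℝ) + 1) * prev i := by
    refine (summable_nat_add_iff 1).mp ?_
    refine (hw.add hw1).congr fun n => ?_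
    show ((n : ℝ) + 1) * |w n| + |w n| = ((((n : ℕ) + 1 : ℕ) : ℝ) + 1) * prev (n + 1)
    push_cast
    show ((n : ℝ) + 1) * |w n| + |w n| = ((n : ℝ) + 1 + 1) * |w n|
    ring
  have hg : Summable fun i : ℕ => ((i : ℝ) + 1) * prev i + ((i : ℝ) + 1) * |w i| :=
    hprev.add hw
  have hpt : ∀ i : ℕ, ((i : ℝ) + 1) * |Lmap w i|
      ≤ ((i : ℝ) + 1) * prev i + ((i : ℝ) + 1) * |w i| := by
    intro i
    cases i with
    | zero => simp [Lmap, hprevdef]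
    | succ n =>
      have h1 : |Lmap w (n + 1)| ≤ prev (n + 1) + |w (n + 1)| := by
        show |w n - w (n + 1)| ≤ |w n| + |w (n + 1)|
        exact abs_sub _ _
      have h2 : (0 : ℝ) ≤ ((n + 1 : ℕ) : ℝ) + 1 := by positivity
      nlinarith [mul_le_mul_of_nonneg_left h1 h2]
  have hL : Summable (fun i : ℕ => ((i : ℝ) + 1) * |Lmap w i|) :=
    Summable.of_nonneg_of_le (fun i => by positivity) hpt hg
  refine ⟨hL, ?_⟩
  have h5 : ∑' i : ℕ, ((i : ℝ) + 1) * |Lmap w i|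
      ≤ ∑' i : ℕ, (((i : ℝ) + 1) * prev i + ((i : ℝ) + 1) * |w i|) :=
    Summable.tsum_le_tsum hpt hL hg
  have h6 : ∑' i : ℕ, (((i : ℝ) + 1) * prev i + ((i : ℝ) + 1) * |w i|)
      = (∑' i : ℕ, ((i : ℝ) + 1) * prev i) + ∑' i : ℕ, ((i : ℝ) + 1) * |w i| :=
    Summable.tsum_add hprev hw
  have h7 : ∑' i : ℕ, ((i : ℝ) + 1) * prev i
      = (∑' j : ℕ, ((j : ℝ) + 1) * |w j|) + ∑' j : ℕ, |w j| := by
    rw [Summable.tsum_eq_zero_add hprev]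
    have : (fun n : ℕ => ((((n : ℕ) + 1 : ℕ) : ℝ) + 1) * prev (n + 1))
        = fun n : ℕ => ((n : ℝ) + 1) * |w n| + |w n| := by
      funext n
      show ((((n : ℕ) + 1 : ℕ) : ℝ) + 1) * |w n| = ((n : ℝ) + 1) * |w n| + |w n|
      push_cast
      ring
    rw [this, Summable.tsum_add hw hw1]
    simp [hprevdef]
  linarith

lemma mu_summable_sub {x y : ℕ → ℝ}
    (hx : Summable fun j : ℕ => ((j : ℝ) + 1) * |x j|)
    (hy : Summable fun j : ℕ => ((j : ℝ) + 1) * |y j|) :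
    Summable fun j : ℕ => ((j : ℝ) + 1) * |x j - y j| := by
  refine Summable.of_nonneg_of_le (fun j => by positivity) (fun j => ?_) (hx.add hy)
  have h1 : |x j - y j| ≤ |x j| + |y j| := abs_sub _ _
  have h2 : (0 : ℝ) ≤ (j : ℝ) + 1 := by positivity
  nlinarith [mul_le_mul_of_nonneg_left h1 h2]

lemma mu_summable_add {x y : ℕ → ℝ}
    (hx : Summable fun j : ℕ => ((j : ℝ) + 1) * |x j|)
    (hy : Summable fun j : ℕ => ((j : ℝ) + 1) * |y j|) :
    Summable fun j : ℕ => ((j : ℝ) + 1) * |x j + y j| := by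
  refine Summable.of_nonneg_of_le (fun j => by positivity) (fun j => ?_) (hx.add hy)
  have h1 : |x j + y j| ≤ |x j| + |y j| := abs_add_le _ _
  have h2 : (0 : ℝ) ≤ (j : ℝ) + 1 := by positivity
  nlinarith [mul_le_mul_of_nonneg_left h1 h2]

set_option maxHeartbeats 1000000 in
theorem arrigoniF_locally_lipschitz
    (ρ γ κ : ℝ) (hρ : 0 ≤ ρ) (hγ : 0 ≤ γ) (hκ : 0 ≤ κ)
    (z : ℝ) (x y : ℕ → ℝ)
    (hx : Summable (fun j : ℕ => ((j : ℝ) + 1) * |x j|))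
    (hy : Summable (fun j : ℕ => ((j : ℝ) + 1) * |y j|))
    (hxz : ∑' j : ℕ, ((j : ℝ) + 1) * |x j| ≤ z)
    (hyz : ∑' j : ℕ, ((j : ℝ) + 1) * |y j| ≤ z) :
    ∑' i : ℕ, ((i : ℝ) + 1) * |arrigoniF ρ γ κ x i - arrigoniF ρ γ κ y i|
      ≤ 4 * ρ * γ * z * ∑' j : ℕ, ((j : ℝ) + 1) * |x j - y j| := by
  -- abbreviations
  set d : ℕ → ℝ := fun j => x j - y j with hd_def
  set v : ℕ → ℝ := fun j => x j + y j with hv_def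
  have hd : Summable fun j : ℕ => ((j : ℝ) + 1) * |d j| := mu_summable_sub hx hy
  have hv : Summable fun j : ℕ => ((j : ℝ) + 1) * |v j| := mu_summable_add hx hy
  set D : ℝ := ∑' j : ℕ, ((j : ℝ) + 1) * |d j| with hD_def
  set V : ℝ := ∑' j : ℕ, ((j : ℝ) + 1) * |v j| with hV_def
  set D₁ : ℝ := ∑' j : ℕ, |d j| with hD1_def
  set V₁ : ℝ := ∑' j : ℕ, |v j| with hV1_def
  set Sx : ℝ := sFun x with hSx_def
  set Sy : ℝ := sFun y with hSy_def
  have hrg : (0 : ℝ) ≤ ρ * γ := mul_nonneg hρ hγ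
  have hrg2 : (0 : ℝ) ≤ ρ * γ / 2 := by linarith
  -- sums of the x/y series
  have hsx : Summable fun j : ℕ => (j : ℝ) * x j := coe_mul_summable_of_mu hx
  have hsy : Summable fun j : ℕ => (j : ℝ) * y j := coe_mul_summable_of_mu hy
  -- |Sx + Sy| and |Sx - Sy| bounds
  have hadd : sFun v = Sx + Sy := by
    rw [hSx_def, hSy_def]
    unfold sFun
    rw [← Summable.tsum_add hsx hsy]
    exact tsum_congr fun j => by
      show (j : ℝ) * (x j + y j) = (j : ℝ) * x j + (j : ℝ) * y j
      ring
  have hsub : sFun d = Sx - Sy := by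
    rw [hSx_def, hSy_def]
    unfold sFun
    rw [← Summable.tsum_sub hsx hsy]
    exact tsum_congr fun j => by
      show (j : ℝ) * (x j - y j) = (j : ℝ) * x j - (j : ℝ) * y j
      ring
  have hMs : |Sx + Sy| ≤ V - V₁ := by
    have := sFun_abs_le hv
    rw [hadd] at this
    exact this
  have hNs : |Sx - Sy| ≤ D - D₁ := by
    have := sFun_abs_le hd
    rw [hsub] at this
    exact this
  -- the pointwise identity
  have key : ∀ i : ℕ, |arrigoniF ρ γ κ x i - arrigoniF ρ γ κ y i|
      = (ρ * γ / 2) * |Lmap d i * (Sx + Sy) + Lmap v i * (Sx - Sy)| := by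
    intro i
    cases i with
    | zero =>
      have h0 : arrigoniF ρ γ κ x 0 - arrigoniF ρ γ κ y 0
          = -((ρ * γ / 2) * (Lmap d 0 * (Sx + Sy) + Lmap v 0 * (Sx - Sy))) := by
        show (-(ρ * γ) * x 0 * Sx + κ) - (-(ρ * γ) * y 0 * Sy + κ)
            = -((ρ * γ / 2) * ((x 0 - y 0) * (Sx + Sy) + (x 0 + y 0) * (Sx - Sy)))
        ring
      rw [h0, abs_neg, abs_mul, abs_of_nonneg hrg2]
    | succ n =>
      have h0 : arrigoniF ρ γ κ x (n + 1) - arrigoniF ρ γ κ y (n + 1)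
          = (ρ * γ / 2) * (Lmap d (n + 1) * (Sx + Sy) + Lmap v (n + 1) * (Sx - Sy)) := by
        show (ρ * γ * (x n - x (n + 1)) * Sx) - (ρ * γ * (y n - y (n + 1)) * Sy)
            = (ρ * γ / 2) * (((x n - y n) - (x (n + 1) - y (n + 1))) * (Sx + Sy)
                + ((x n + y n) - (x (n + 1) + y (n + 1))) * (Sx - Sy))
        ring
      rw [h0, abs_mul, abs_of_nonneg hrg2]
  -- summable majorant
  have hLd := Lmap_bound hd
  have hLv := Lmap_bound hv
  set Td : ℝ := ∑' i : ℕ, ((i : ℝ) + 1) * |Lmap d i| with hTd_def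
  set Tv : ℝ := ∑' i : ℕ, ((i : ℝ) + 1) * |Lmap v i| with hTv_def
  have hg : Summable fun i : ℕ =>
      (ρ * γ / 2) * (|Sx + Sy| * (((i : ℝ) + 1) * |Lmap d i|)
        + |Sx - Sy| * (((i : ℝ) + 1) * |Lmap v i|)) :=
    (((hLd.1.mul_left |Sx + Sy|).add (hLv.1.mul_left |Sx - Sy|)).mul_left (ρ * γ / 2))
  have hpt : ∀ i : ℕ, ((i : ℝ) + 1) * |arrigoniF ρ γ κ x i - arrigoniF ρ γ κ y i|
      ≤ (ρ * γ / 2) * (|Sx + Sy| * (((i : ℝ) + 1) * |Lmap d i|)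
        + |Sx - Sy| * (((i : ℝ) + 1) * |Lmap v i|)) := by
    intro i
    rw [key i]
    have h1 : |Lmap d i * (Sx + Sy) + Lmap v i * (Sx - Sy)|
        ≤ |Lmap d i| * |Sx + Sy| + |Lmap v i| * |Sx - Sy| := by
      calc |Lmap d i * (Sx + Sy) + Lmap v i * (Sx - Sy)|
          ≤ |Lmap d i * (Sx + Sy)| + |Lmap v i * (Sx - Sy)| := abs_add_le _ _
        _ = |Lmap d i| * |Sx + Sy| + |Lmap v i| * |Sx - Sy| := by rw [abs_mul, abs_mul]
    have hi : (0 : ℝ) ≤ (i : ℝ) + 1 := by positivity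
    calc ((i : ℝ) + 1) * ((ρ * γ / 2) * |Lmap d i * (Sx + Sy) + Lmap v i * (Sx - Sy)|)
        = (ρ * γ / 2 * ((i : ℝ) + 1))
            * |Lmap d i * (Sx + Sy) + Lmap v i * (Sx - Sy)| := by ring
      _ ≤ (ρ * γ / 2 * ((i : ℝ) + 1))
            * (|Lmap d i| * |Sx + Sy| + |Lmap v i| * |Sx - Sy|) :=
          mul_le_mul_of_nonneg_left h1 (by positivity)
      _ = (ρ * γ / 2) * (|Sx + Sy| * (((i : ℝ) + 1) * |Lmap d i|)
            + |Sx - Sy| * (((i : ℝ) + 1) * |Lmap v i|)) := by ring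
  have hLHS : Summable fun i : ℕ =>
      ((i : ℝ) + 1) * |arrigoniF ρ γ κ x i - arrigoniF ρ γ κ y i| :=
    Summable.of_nonneg_of_le (fun i => by positivity) hpt hg
  have hle : ∑' i : ℕ, ((i : ℝ) + 1) * |arrigoniF ρ γ κ x i - arrigoniF ρ γ κ y i|
      ≤ (ρ * γ / 2) * (|Sx + Sy| * Td + |Sx - Sy| * Tv) := by
    have h1 := Summable.tsum_le_tsum hpt hLHS hg
    have h2 : ∑' i : ℕ, (ρ * γ / 2) * (|Sx + Sy| * (((i : ℝ) + 1) * |Lmap d i|)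
        + |Sx - Sy| * (((i : ℝ) + 1) * |Lmap v i|))
        = (ρ * γ / 2) * (|Sx + Sy| * Td + |Sx - Sy| * Tv) := by
      rw [tsum_mul_left, Summable.tsum_add (hLd.1.mul_left _) (hLv.1.mul_left _),
        tsum_mul_left, tsum_mul_left]
    linarith [h2 ▸ h1]
  -- numeric bookkeeping
  have hD0 : 0 ≤ D := tsum_nonneg fun j => by positivity
  have hV0 : 0 ≤ V := tsum_nonneg fun j => by positivity
  have hD10 : 0 ≤ D₁ := tsum_nonneg fun j => abs_nonneg _
  have hV10 : 0 ≤ V₁ := tsum_nonneg fun j => abs_nonneg _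
  have hTd0 : 0 ≤ Td := tsum_nonneg fun i => by positivity
  have hTv0 : 0 ≤ Tv := tsum_nonneg fun i => by positivity
  have hVle : V ≤ (∑' j : ℕ, ((j : ℝ) + 1) * |x j|) + ∑' j : ℕ, ((j : ℝ) + 1) * |y j| := by
    rw [← Summable.tsum_add hx hy]
    refine Summable.tsum_le_tsum (fun j => ?_) hv (hx.add hy)
    have h1 : |v j| ≤ |x j| + |y j| := abs_add_le _ _
    have h2 : (0 : ℝ) ≤ (j : ℝ) + 1 := by positivity
    nlinarith [mul_le_mul_of_nonneg_left h1 h2]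
  have hV2z : V ≤ 2 * z := by linarith
  -- combine
  have h1 : |Sx + Sy| * Td ≤ (V - V₁) * (2 * D + D₁) :=
    mul_le_mul hMs hLd.2 hTd0 (le_trans (abs_nonneg _) hMs)
  have h2 : |Sx - Sy| * Tv ≤ (D - D₁) * (2 * V + V₁) :=
    mul_le_mul hNs hLv.2 hTv0 (le_trans (abs_nonneg _) hNs)
  have e1 : |Sx + Sy| * Td + |Sx - Sy| * Tv ≤ 4 * V * D := by
    nlinarith [mul_nonneg hV10 hD0, mul_nonneg hV0 hD10, mul_nonneg hV10 hD10]
  have e2 : (ρ * γ / 2) * (|Sx + Sy| * Td + |Sx - Sy| * Tv) ≤ (ρ * γ / 2) * (4 * V * D) :=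
    mul_le_mul_of_nonneg_left e1 hrg2
  have e3 : (ρ * γ / 2) * (4 * V * D) ≤ (ρ * γ / 2) * (4 * (2 * z) * D) := by
    refine mul_le_mul_of_nonneg_left ?_ hrg2
    nlinarith [mul_le_mul_of_nonneg_right hV2z hD0]
  have e4 : (ρ * γ / 2) * (4 * (2 * z) * D) = 4 * ρ * γ * z * D := by ring
  calc ∑' i : ℕ, ((i : ℝ) + 1) * |arrigoniF ρ γ κ x i - arrigoniF ρ γ κ y i|
      ≤ (ρ * γ / 2) * (|Sx + Sy| * Td + |Sx - Sy| * Tv) := hle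
    _ ≤ (ρ * γ / 2) * (4 * V * D) := e2
    _ ≤ (ρ * γ / 2) * (4 * (2 * z) * D) := e3
    _ = 4 * ρ * γ * z * D := e4
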